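/- arXiv:1901.06041 — 3 statements merged into one kernel-verified Lean document; each statement's English description precedes it below -/
import Mathlib

section
/- Let a \in \mathbb{R}, N \ge 1 an integer, and let r be a function analytic on the unit disc |y|<1. Then the ODE -y\,\varphi'(y) + \left(\frac{a y}{(1-y)^2} - N\right)\varphi(y) = r(y) has exactly one solution analytic at y = 0, namely \varphi(y) = -y^{-N} e^{a/(1-y)} \int_0^y \eta^{N-1} e^{-a/(1-\eta)}\, r(\eta)\, d\eta, and this solution is analytic on the whole unit disc. -/
open Complex Metric intervalIntegral

noncomputable def odeH (a : ℝ) (r : ℂ → ℂ) (z : ℂ) : ℂ :=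
  Complex.exp (-(a : ℂ) / (1 - z)) * r z

noncomputable def odeG (a : ℝ) (N : ℕ) (r : ℂ → ℂ) (y : ℂ) : ℂ :=
  ∫ s in (0:ℝ)..1, (s : ℂ) ^ (N - 1) * odeH a r ((s : ℂ) * y)

lemma one_sub_ne_zero_of_ball {z : ℂ} (hz : z ∈ Metric.ball (0 : ℂ) 1) :
    (1 : ℂ) - z ≠ 0 := by
  intro h
  have : z = 1 := by linear_combination -h
  rw [this] at hz
  simp at hz

lemma odeH_analytic (a : ℝ) (r : ℂ → ℂ)
    (hr : AnalyticOnNhd ℂ r (Metric.ball (0 : ℂ) 1)) :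
    AnalyticOnNhd ℂ (odeH a r) (Metric.ball (0 : ℂ) 1) := by
  intro z hz
  exact ((analyticAt_const.div (analyticAt_const.sub (analyticAt_id))
    (one_sub_ne_zero_of_ball hz)).cexp).mul (hr z hz)

lemma smul_mem_ball {s : ℝ} (hs : |s| ≤ 1) {y : ℂ} (hy : y ∈ Metric.ball (0 : ℂ) 1) :
    (s : ℂ) * y ∈ Metric.ball (0 : ℂ) 1 := by
  rw [mem_ball_zero_iff] at hy ⊢
  calc ‖(s : ℂ) * y‖ = |s| * ‖y‖ := by rw [norm_mul, Complex.norm_real, Real.norm_eq_abs]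
  _ ≤ 1 * ‖y‖ := by gcongr
  _ < 1 := by simpa using hy

lemma odeG_hasDerivAt (a : ℝ) (N : ℕ) (r : ℂ → ℂ)
    (hr : AnalyticOnNhd ℂ r (Metric.ball (0 : ℂ) 1)) {y₀ : ℂ}
    (hy₀ : y₀ ∈ Metric.ball (0 : ℂ) 1) :
    HasDerivAt (odeG a N r)
      (∫ s in (0:ℝ)..1,
        (s : ℂ) ^ (N - 1) * (deriv (odeH a r) ((s : ℂ) * y₀) * (s : ℂ))) y₀ := by
  have hH := odeH_analytic a r hr
  have hHc : ContinuousOn (odeH a r) (Metric.ball (0 : ℂ) 1) := hH.continuousOn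
  have hH'c : ContinuousOn (deriv (odeH a r)) (Metric.ball (0 : ℂ) 1) :=
    (hH.deriv).continuousOn
  set ε : ℝ := (1 - ‖y₀‖) / 2 with hε
  have hy₀n : ‖y₀‖ < 1 := by simpa [mem_ball_zero_iff] using hy₀
  have hεpos : 0 < ε := by rw [hε]; linarith
  set ρ : ℝ := (1 + ‖y₀‖) / 2 with hρ
  have hρ1 : ρ < 1 := by rw [hρ]; linarith
  have hρ0 : 0 ≤ ρ := by positivity
  -- membership facts
  have hmem : ∀ x ∈ Metric.ball y₀ ε, ∀ s : ℝ, |s| ≤ 1 →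
      (s : ℂ) * x ∈ Metric.closedBall (0 : ℂ) ρ := by
    intro x hx s hs
    rw [mem_closedBall_zero_iff]
    have hxn : ‖x‖ ≤ ρ := by
      have := mem_ball_iff_norm.mp hx
      calc ‖x‖ ≤ ‖x - y₀‖ + ‖y₀‖ := by
            simpa using norm_add_le (x - y₀) y₀
      _ ≤ ε + ‖y₀‖ := by linarith
      _ = ρ := by rw [hε, hρ]; ring
    calc ‖(s : ℂ) * x‖ = |s| * ‖x‖ := by
          rw [norm_mul, Complex.norm_real, Real.norm_eq_abs]
    _ ≤ 1 * ρ := by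
        apply mul_le_mul hs hxn (norm_nonneg x) zero_le_one
    _ = ρ := one_mul ρ
  have hball : Metric.closedBall (0 : ℂ) ρ ⊆ Metric.ball (0 : ℂ) 1 := by
    intro z hz
    rw [mem_closedBall_zero_iff] at hz
    rw [mem_ball_zero_iff]; linarith
  have hballmem : ∀ x ∈ Metric.ball y₀ ε, ∀ s : ℝ, |s| ≤ 1 →
      (s : ℂ) * x ∈ Metric.ball (0 : ℂ) 1 := fun x hx s hs => hball (hmem x hx s hs)
  -- bound
  obtain ⟨C, hC⟩ := (isCompact_closedBall (0 : ℂ) ρ).exists_bound_of_continuousOn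
    (hH'c.mono hball)
  -- continuity of t ↦ t*x as map into ball
  have hcont : ∀ x ∈ Metric.ball y₀ ε,
      ContinuousOn (fun t : ℝ => (t : ℂ) ^ (N - 1) * odeH a r ((t : ℂ) * x))
        (Set.Icc (0:ℝ) 1) := by
    intro x hx
    apply ContinuousOn.mul
    · exact (continuous_ofReal.pow _).continuousOn
    · apply hHc.comp (Continuous.continuousOn (by continuity))
      intro t ht
      exact hballmem x hx t (by rw [abs_le]; exact ⟨by linarith [ht.1], ht.2⟩)
  have hy₀mem : y₀ ∈ Metric.ball y₀ ε := mem_ball_self hεpos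
  have key := intervalIntegral.hasDerivAt_integral_of_dominated_loc_of_deriv_le
    (F := fun x t => (t : ℂ) ^ (N - 1) * odeH a r ((t : ℂ) * x))
    (F' := fun x t => (t : ℂ) ^ (N - 1) * (deriv (odeH a r) ((t : ℂ) * x) * (t : ℂ)))
    (x₀ := y₀) (a := 0) (b := 1) (bound := fun _ => C) (μ := MeasureTheory.volume) (Metric.ball_mem_nhds y₀ hεpos)
    ?_ ?_ ?_ ?_ ?_ ?_
  · exact key.2
  · filter_upwards [Metric.ball_mem_nhds y₀ hεpos] with x hx
    apply ContinuousOn.aestronglyMeasurable _ measurableSet_uIoc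
    exact (hcont x hx).mono (by rw [Set.uIoc_of_le zero_le_one]; exact Set.Ioc_subset_Icc_self)
  · exact ((hcont y₀ hy₀mem).mono (by rw [Set.uIcc_of_le zero_le_one])).intervalIntegrable
  · apply ContinuousOn.aestronglyMeasurable _ measurableSet_uIoc
    apply ContinuousOn.mono _ (show Set.uIoc (0:ℝ) 1 ⊆ Set.Icc 0 1 by
      rw [Set.uIoc_of_le zero_le_one]; exact Set.Ioc_subset_Icc_self)
    apply ContinuousOn.mul
    · exact (continuous_ofReal.pow _).continuousOn
    apply ContinuousOn.mul _ continuous_ofReal.continuousOn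
    apply hH'c.comp (Continuous.continuousOn (by continuity))
    intro t ht
    exact hballmem y₀ hy₀mem t (by rw [abs_le]; exact ⟨by linarith [ht.1], ht.2⟩)
  · apply Filter.Eventually.of_forall
    intro t ht x hx
    have ht' : |t| ≤ 1 := by
      rw [Set.uIoc_of_le zero_le_one] at ht
      rw [abs_le]; exact ⟨by linarith [ht.1], ht.2⟩
    have hb := hC _ (hmem x hx t ht')
    calc ‖(t : ℂ) ^ (N - 1) * (deriv (odeH a r) ((t : ℂ) * x) * (t : ℂ))‖
        = ‖(t:ℂ)‖ ^ (N - 1) * (‖deriv (odeH a r) ((t : ℂ) * x)‖ * ‖(t:ℂ)‖) := by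
          rw [norm_mul, norm_mul, norm_pow]
    _ ≤ 1 ^ (N - 1) * (C * 1) := by
        have h1 : ‖(t:ℂ)‖ ≤ 1 := by rwa [Complex.norm_real, Real.norm_eq_abs]
        gcongr
        exact (norm_nonneg _).trans hb
    _ = C := by ring
  · exact intervalIntegrable_const
  · apply Filter.Eventually.of_forall
    intro t ht x hx
    have ht' : |t| ≤ 1 := by
      rw [Set.uIoc_of_le zero_le_one] at ht
      rw [abs_le]; exact ⟨by linarith [ht.1], ht.2⟩
    have hd : HasDerivAt (odeH a r) (deriv (odeH a r) ((t:ℂ) * x)) ((t:ℂ) * x) :=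
      ((hH _ (hballmem x hx t ht')).differentiableAt).hasDerivAt
    have hm : HasDerivAt (fun y : ℂ => (t : ℂ) * y) (t : ℂ) x := by
      simpa using (hasDerivAt_id x).const_mul (t : ℂ)
    exact ((hd.comp x hm).const_mul _)

lemma odeG_key (a : ℝ) (M : ℕ) (r : ℂ → ℂ)
    (hr : AnalyticOnNhd ℂ r (Metric.ball (0 : ℂ) 1)) {y : ℂ}
    (hy : y ∈ Metric.ball (0 : ℂ) 1) :
    y * (∫ s in (0:ℝ)..1,
        (s : ℂ) ^ (M + 1 - 1) * (deriv (odeH a r) ((s : ℂ) * y) * (s : ℂ)))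
      + (M + 1 : ℕ) * odeG a (M + 1) r y = odeH a r y := by
  have hH := odeH_analytic a r hr
  have hHc : ContinuousOn (odeH a r) (Metric.ball (0 : ℂ) 1) := hH.continuousOn
  have hH'c : ContinuousOn (deriv (odeH a r)) (Metric.ball (0 : ℂ) 1) := (hH.deriv).continuousOn
  have habs : ∀ s : ℝ, s ∈ Set.Icc (0:ℝ) 1 → |s| ≤ 1 := by
    intro s hs; rw [abs_le]; exact ⟨by linarith [hs.1], hs.2⟩
  have hmapsc : Continuous (fun t : ℝ => (t : ℂ) * y) := by continuity
  have hmaps : Set.MapsTo (fun t : ℝ => (t : ℂ) * y) (Set.Icc (0:ℝ) 1)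
      (Metric.ball (0:ℂ) 1) := fun t ht => smul_mem_ball (habs t ht) hy
  -- continuity facts on Icc 0 1
  have hcont1 : ContinuousOn (fun s : ℝ => (s : ℂ) ^ (M + 1 - 1) * odeH a r ((s : ℂ) * y))
      (Set.Icc (0:ℝ) 1) :=
    ((continuous_ofReal.pow _).continuousOn).mul (hHc.comp hmapsc.continuousOn hmaps)
  have hcont2 : ContinuousOn
      (fun s : ℝ => (s : ℂ) ^ (M + 1 - 1) * (deriv (odeH a r) ((s : ℂ) * y) * (s : ℂ)))
      (Set.Icc (0:ℝ) 1) :=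
    ((continuous_ofReal.pow _).continuousOn).mul
      ((hH'c.comp hmapsc.continuousOn hmaps).mul continuous_ofReal.continuousOn)
  have hint1 : IntervalIntegrable
      (fun s : ℝ => (s : ℂ) ^ (M + 1 - 1) * odeH a r ((s : ℂ) * y))
      MeasureTheory.volume 0 1 :=
    (hcont1.mono (by rw [Set.uIcc_of_le zero_le_one])).intervalIntegrable
  have hint2 : IntervalIntegrable
      (fun s : ℝ => (s : ℂ) ^ (M + 1 - 1) * (deriv (odeH a r) ((s : ℂ) * y) * (s : ℂ)))
      MeasureTheory.volume 0 1 :=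
    (hcont2.mono (by rw [Set.uIcc_of_le zero_le_one])).intervalIntegrable
  rw [odeG, ← intervalIntegral.integral_const_mul, ← intervalIntegral.integral_const_mul,
    ← intervalIntegral.integral_add (hint2.const_mul y) (hint1.const_mul _)]
  have := intervalIntegral.integral_eq_sub_of_hasDerivAt
    (f := fun s : ℝ => (s : ℂ) ^ (M + 1) * odeH a r ((s : ℂ) * y))
    (f' := fun s : ℝ => y * ((s : ℂ) ^ (M + 1 - 1) * (deriv (odeH a r) ((s : ℂ) * y) * (s : ℂ)))
      + (M + 1 : ℕ) * ((s : ℂ) ^ (M + 1 - 1) * odeH a r ((s : ℂ) * y)))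
    (a := 0) (b := 1) ?_ ?_
  · rw [this]
    norm_num [odeH]
  · intro s hs
    rw [Set.uIcc_of_le zero_le_one] at hs
    have hsy : (s : ℂ) * y ∈ Metric.ball (0:ℂ) 1 := smul_mem_ball (habs s hs) hy
    have hd : HasDerivAt (odeH a r) (deriv (odeH a r) ((s:ℂ) * y)) ((s:ℂ) * y) :=
      ((hH _ hsy).differentiableAt).hasDerivAt
    have hm : HasDerivAt (fun z : ℂ => z * y) y (s : ℂ) := by
      simpa using (hasDerivAt_id (s:ℂ)).mul_const y
    have h1 : HasDerivAt (fun t : ℝ => odeH a r ((t : ℂ) * y))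
        (deriv (odeH a r) ((s:ℂ) * y) * y) s := by have h := hd.comp (s:ℂ) hm; exact h.comp_ofReal
    have h2 : HasDerivAt (fun t : ℝ => (t : ℂ) ^ (M + 1))
        ((M + 1 : ℕ) * (s : ℂ) ^ M) s := by
      simpa using (hasDerivAt_pow (M + 1) (s : ℂ)).comp_ofReal
    have := h2.mul h1
    refine this.congr_deriv (Eq.symm ?_)
    push_cast
    ring
  · exact (hint2.const_mul y).add (hint1.const_mul _)

lemma cexp_div_hasDerivAt (c : ℂ) {y : ℂ} (hy : (1:ℂ) - y ≠ 0) :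
    HasDerivAt (fun z : ℂ => Complex.exp (c / (1 - z)))
      (Complex.exp (c / (1 - y)) * (c / (1 - y) ^ 2)) y := by
  have h1 : HasDerivAt (fun z : ℂ => 1 - z) (-1) y := by
    simpa using (hasDerivAt_id y).const_sub 1
  have h2 := ((h1.inv hy).const_mul c).cexp
  have he : (fun z : ℂ => Complex.exp (c * (1 - z)⁻¹)) =
      fun z : ℂ => Complex.exp (c / (1 - z)) := by
    funext z; rw [div_eq_mul_inv]
  simp only [Pi.inv_apply] at h2
  rw [he] at h2
  refine h2.congr_deriv (Eq.symm ?_)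
  rw [div_eq_mul_inv]
  field_simp

/-- For `a ∈ ℝ`, `N ≥ 1` and `r` analytic on the unit disc, the ODE
`-y φ'(y) + (a y/(1-y)² - N) φ(y) = r(y)` has exactly one solution analytic on
the unit disc (in particular analytic at `0`), and away from `0` it is given by
`φ(y) = -y^{-N} e^{a/(1-y)} ∫₀^y η^{N-1} e^{-a/(1-η)} r(η) dη`, the contour
integral being parameterized along the segment from `0` to `y`. -/
theorem inhomogeneous_ode_unique_analytic_solution (a : ℝ) (N : ℕ) (hN : 1 ≤ N)
    (r : ℂ → ℂ) (hr : AnalyticOnNhd ℂ r (Metric.ball (0 : ℂ) 1)) :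
    ∃ φ : ℂ → ℂ,
      (AnalyticOnNhd ℂ φ (Metric.ball (0 : ℂ) 1) ∧
        (∀ y ∈ Metric.ball (0 : ℂ) 1,
          -y * deriv φ y + ((a : ℂ) * y / (1 - y) ^ 2 - (N : ℂ)) * φ y = r y)) ∧
      (∀ y ∈ Metric.ball (0 : ℂ) 1, y ≠ 0 →
        φ y = -(y ^ (-(N : ℤ))) * Complex.exp ((a : ℂ) / (1 - y)) *
          (y * ∫ s in (0 : ℝ)..1,
            ((s : ℂ) * y) ^ (N - 1) * Complex.exp (-(a : ℂ) / (1 - (s : ℂ) * y))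
              * r ((s : ℂ) * y))) ∧
      (∀ ψ : ℂ → ℂ,
        AnalyticOnNhd ℂ ψ (Metric.ball (0 : ℂ) 1) →
        (∀ y ∈ Metric.ball (0 : ℂ) 1,
          -y * deriv ψ y + ((a : ℂ) * y / (1 - y) ^ 2 - (N : ℂ)) * ψ y = r y) →
        ∀ y ∈ Metric.ball (0 : ℂ) 1, ψ y = φ y) := by
  obtain ⟨M, rfl⟩ : ∃ M, N = M + 1 := ⟨N - 1, by omega⟩
  set D := Metric.ball (0 : ℂ) 1 with hD
  set φ : ℂ → ℂ := fun y => -(Complex.exp ((a : ℂ) / (1 - y)) * odeG a (M + 1) r y)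
    with hφdef
  -- derivative of φ
  have hφd : ∀ y ∈ D, HasDerivAt φ
      (-(Complex.exp ((a : ℂ) / (1 - y)) * ((a : ℂ) / (1 - y) ^ 2) * odeG a (M + 1) r y
        + Complex.exp ((a : ℂ) / (1 - y)) *
          (∫ s in (0:ℝ)..1,
            (s : ℂ) ^ (M + 1 - 1) * (deriv (odeH a r) ((s : ℂ) * y) * (s : ℂ))))) y := by
    intro y hy
    exact ((cexp_div_hasDerivAt (a : ℂ) (one_sub_ne_zero_of_ball hy)).mul
      (odeG_hasDerivAt a (M + 1) r hr hy)).neg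
  have hanal : AnalyticOnNhd ℂ φ D := by
    apply DifferentiableOn.analyticOnNhd _ isOpen_ball
    exact fun y hy => (hφd y hy).differentiableAt.differentiableWithinAt
  have hEh : ∀ y ∈ D, Complex.exp ((a : ℂ) / (1 - y)) * odeH a r y = r y := by
    intro y hy
    rw [odeH, ← mul_assoc, ← Complex.exp_add]
    have : (a : ℂ) / (1 - y) + -(a : ℂ) / (1 - y) = 0 := by ring
    rw [this, Complex.exp_zero, one_mul]
  have hode : ∀ y ∈ D,
      -y * deriv φ y + ((a : ℂ) * y / (1 - y) ^ 2 - ((M + 1 : ℕ) : ℂ)) * φ y = r y := by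
    intro y hy
    rw [(hφd y hy).deriv]
    have key := odeG_key a M r hr hy
    have hEr := hEh y hy
    rw [hφdef]
    push_cast at key ⊢
    linear_combination Complex.exp ((a : ℂ) / (1 - y)) * key + hEr
  refine ⟨φ, ⟨hanal, hode⟩, ?_, ?_⟩
  · -- explicit formula
    intro y hy hy0
    have hcongr : (∫ s in (0 : ℝ)..1,
        ((s : ℂ) * y) ^ (M + 1 - 1) * Complex.exp (-(a : ℂ) / (1 - (s : ℂ) * y))
          * r ((s : ℂ) * y))
        = y ^ M * odeG a (M + 1) r y := by
      rw [odeG, ← intervalIntegral.integral_const_mul]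
      apply intervalIntegral.integral_congr
      intro s hs
      simp only [odeH]
      rw [mul_pow, Nat.add_sub_cancel]
      ring
    rw [hcongr, hφdef]
    have hyN : y ^ (M + 1) ≠ 0 := pow_ne_zero _ hy0
    rw [zpow_neg, zpow_natCast]
    field_simp
    ring
  · -- uniqueness
    intro ψ hψ hψeq y hy
    have hφana := hanal
    set u : ℂ → ℂ := fun y => y ^ (M + 1) *
      (Complex.exp (-(a : ℂ) / (1 - y)) * (ψ y - φ y)) with hudef
    have hud : ∀ x ∈ D, HasDerivAt u 0 x := by
      intro x hx
      have h1 : HasDerivAt (fun z : ℂ => z ^ (M + 1))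
          (((M + 1 : ℕ) : ℂ) * x ^ M) x := by simpa using hasDerivAt_pow (M + 1) x
      have hE := cexp_div_hasDerivAt (-(a : ℂ)) (one_sub_ne_zero_of_ball hx)
      have hδ : HasDerivAt (fun z => ψ z - φ z) (deriv ψ x - deriv φ x) x :=
        ((hψ x hx).differentiableAt.hasDerivAt).sub
          ((hφana x hx).differentiableAt.hasDerivAt)
      have htot := h1.mul (hE.mul hδ)
      have heq1 := hψeq x hx
      have heq2 := hode x hx
      refine htot.congr_deriv (Eq.symm ?_)
      simp only [Pi.mul_apply]
      push_cast at heq1 heq2 ⊢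
      linear_combination (x ^ M * Complex.exp (-(a : ℂ) / (1 - x))) * heq1
        - (x ^ M * Complex.exp (-(a : ℂ) / (1 - x))) * heq2
    have hu0 : ∀ x ∈ D, u x = 0 := by
      intro x hx
      have h0D : (0 : ℂ) ∈ D := by simp [hD]
      have := (convex_ball (0 : ℂ) 1).norm_image_sub_le_of_norm_hasFDerivWithin_le
        (f := u) (C := 0)
        (f' := fun _ => ContinuousLinearMap.smulRight (1 : ℂ →L[ℂ] ℂ) (0 : ℂ))
        (fun z hz => by
          have := (hud z hz).hasFDerivAt.hasFDerivWithinAt (s := D)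
          exact this)
        (fun z hz => by simp) h0D hx
      have hu00 : u 0 = 0 := by simp [hudef]
      have : ‖u x - u 0‖ ≤ 0 := by simpa using this
      have : u x = u 0 := by
        rw [← sub_eq_zero]
        exact norm_le_zero_iff.mp this
      rw [this, hu00]
    by_cases hy0 : y = 0
    · subst hy0
      have h0D : (0 : ℂ) ∈ D := by simp [hD]
      have e1 := hψeq 0 h0D
      have e2 := hode 0 h0D
      simp only [neg_zero, zero_mul, mul_zero, zero_div, zero_sub, neg_mul] at e1 e2
      have hNne : ((M + 1 : ℕ) : ℂ) ≠ 0 :=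
        Nat.cast_ne_zero.mpr (Nat.succ_ne_zero M)
      have : ((M + 1 : ℕ) : ℂ) * ψ 0 = ((M + 1 : ℕ) : ℂ) * φ 0 := by
        linear_combination e2 - e1
      exact mul_left_cancel₀ hNne this
    · have := hu0 y hy
      rw [hudef] at this
      simp only at this
      have hyN : y ^ (M + 1) ≠ 0 := pow_ne_zero _ hy0
      have hexp : Complex.exp (-(a : ℂ) / (1 - y)) ≠ 0 := Complex.exp_ne_zero _
      have hδ0 : ψ y - φ y = 0 := by
        rcases mul_eq_zero.mp this with h | h
        · exact absurd h hyN
        · rcases mul_eq_zero.mp h with h' | h'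
          · exact absurd h' hexp
          · exact h'
      exact sub_eq_zero.mp hδ0
end

section
/- Fix a > 0. On the domain t \in \mathbb{C}\setminus(-\infty,2\sqrt{a}], let \eta(t) be defined by \frac{2}{3}\eta(t)^{3/2} = t\log\frac{t+\sqrt{t^2-4a}}{2\sqrt{a}} - \sqrt{t^2-4a} with \eta(t)>0 for t>2\sqrt{a}. Then \Phi(t) := -\frac{t\sqrt{t^2-4a}}{4\sqrt{\eta(t)}} satisfies the differential equation \sqrt{\eta}\left(\frac{\Phi\eta'}{2\eta} + \Phi' - \frac{\eta}{3} + \frac{t\eta'}{2}\right) = -\frac{a}{\sqrt{t^2-4a}} for t > 2\sqrt{a}. -/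
open Real

/-- For `a > 0` let `η(t) > 0` on `t > 2√a` be defined by
`(2/3) η^{3/2} = t log((t+√(t²-4a))/(2√a)) - √(t²-4a)`, and set
`Φ(t) = - t√(t²-4a)/(4√(η t))`.  Then
`√η (Φη'/(2η) + Φ' - η/3 + tη'/2) = -a/√(t²-4a)` for `t > 2√a`. -/
theorem shift_function_equation (a : ℝ) (ha : 0 < a) (η Φ : ℝ → ℝ)
    (hη_pos : ∀ t : ℝ, 2 * Real.sqrt a < t → 0 < η t)
    (hη_diff : ∀ t : ℝ, 2 * Real.sqrt a < t → DifferentiableAt ℝ η t)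
    (hΦ_diff : ∀ t : ℝ, 2 * Real.sqrt a < t → DifferentiableAt ℝ Φ t)
    (hη_def : ∀ t : ℝ, 2 * Real.sqrt a < t →
      (2 / 3) * (η t) ^ ((3 : ℝ) / 2)
        = t * Real.log ((t + Real.sqrt (t ^ 2 - 4 * a)) / (2 * Real.sqrt a))
          - Real.sqrt (t ^ 2 - 4 * a))
    (hΦ_def : ∀ t : ℝ, 2 * Real.sqrt a < t →
      Φ t = -(t * Real.sqrt (t ^ 2 - 4 * a)) / (4 * Real.sqrt (η t))) :
    ∀ t : ℝ, 2 * Real.sqrt a < t →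
      Real.sqrt (η t) *
          (Φ t * deriv η t / (2 * η t) + deriv Φ t - η t / 3 + t * deriv η t / 2)
        = -(a / Real.sqrt (t ^ 2 - 4 * a)) := by
  intro t ht
  have ha' : 0 < Real.sqrt a := Real.sqrt_pos.mpr ha
  have ht0 : 0 < t := lt_trans (by positivity) ht
  have hUnhds : Set.Ioi (2 * Real.sqrt a) ∈ nhds t := Ioi_mem_nhds ht
  have hs2 : ∀ x : ℝ, 2 * Real.sqrt a < x → 0 < x ^ 2 - 4 * a := by
    intro x hx
    nlinarith [Real.sq_sqrt ha.le, Real.sqrt_nonneg a]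
  have hs2t := hs2 t ht
  have hs : 0 < Real.sqrt (t ^ 2 - 4 * a) := Real.sqrt_pos.mpr hs2t
  set s : ℝ := Real.sqrt (t ^ 2 - 4 * a) with hsdef
  have hts : 0 < t + s := by linarith
  have hE : 0 < η t := hη_pos t ht
  have hS : 0 < Real.sqrt (η t) := Real.sqrt_pos.mpr hE
  set S : ℝ := Real.sqrt (η t) with hSdef
  have hSsq : S ^ 2 = η t := Real.sq_sqrt hE.le
  have hssq : s ^ 2 = t ^ 2 - 4 * a := Real.sq_sqrt hs2t.le
  set L : ℝ := Real.log ((t + s) / (2 * Real.sqrt a)) with hLdef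
  have hLsplit : L = Real.log (t + s) - Real.log (2 * Real.sqrt a) := by
    rw [hLdef, Real.log_div hts.ne' (by positivity)]
  -- derivative of x ↦ √(x² - 4a)
  have hσ : HasDerivAt (fun x : ℝ => Real.sqrt (x ^ 2 - 4 * a)) (t / s) t := by
    have h1 : HasDerivAt (fun x : ℝ => x ^ 2 - 4 * a) (2 * t) t := by
      simpa using (hasDerivAt_pow 2 t).sub_const (4 * a)
    have h2 := h1.sqrt hs2t.ne'
    rw [← hsdef] at h2
    convert h2 using 1
    field_simp
  -- key1 : S * η' = L
  have hf : HasDerivAt (fun x : ℝ => (2 / 3) * η x ^ ((3 : ℝ) / 2))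
      (S * deriv η t) t := by
    have hη := (hη_diff t ht).hasDerivAt
    have hpow := (Real.hasDerivAt_rpow_const (x := η t) (p := (3 : ℝ) / 2)
      (Or.inl hE.ne')).comp t hη
    have h3 := hpow.const_mul (2 / 3 : ℝ)
    refine h3.congr_deriv ?_
    have hrw : η t ^ ((3 : ℝ) / 2 - 1) = S := by
      rw [hSdef, Real.sqrt_eq_rpow]; norm_num
    rw [hrw]
    ring
  have hlog1 : HasDerivAt (fun x : ℝ => Real.log (x + Real.sqrt (x ^ 2 - 4 * a)))
      ((1 + t / s) / (t + s)) t := by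
    have := ((hasDerivAt_id t).add hσ).log (by exact hts.ne')
    simpa using this
  have hg1 : HasDerivAt (fun x : ℝ =>
      x * (Real.log (x + Real.sqrt (x ^ 2 - 4 * a)) - Real.log (2 * Real.sqrt a))
        - Real.sqrt (x ^ 2 - 4 * a)) L t := by
    have hmul := (hasDerivAt_id t).mul (hlog1.sub_const (Real.log (2 * Real.sqrt a)))
    have h4 := hmul.sub hσ
    refine h4.congr_deriv ?_
    rw [hLsplit]
    simp only [id, ← hsdef]
    field_simp
    ring
  have hEq1 : (fun x : ℝ => (2 / 3) * η x ^ ((3 : ℝ) / 2)) =ᶠ[nhds t]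
      (fun x : ℝ =>
        x * (Real.log (x + Real.sqrt (x ^ 2 - 4 * a)) - Real.log (2 * Real.sqrt a))
          - Real.sqrt (x ^ 2 - 4 * a)) := by
    filter_upwards [hUnhds] with x hx
    have hx0 : 0 < x := lt_trans (by positivity) hx
    have hxs : 0 < x + Real.sqrt (x ^ 2 - 4 * a) := by
      have := Real.sqrt_nonneg (x ^ 2 - 4 * a); linarith
    rw [hη_def x hx, Real.log_div hxs.ne' (by positivity)]
  have key1 : S * deriv η t = L := by
    have := hEq1.deriv_eq
    rw [hf.deriv, hg1.deriv] at this
    exact this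
  -- key3 : Φ' S + Φ η'/(2S) = -(s + t²/s)/4
  have hsqη : HasDerivAt (fun x : ℝ => Real.sqrt (η x)) (deriv η t / (2 * S)) t := by
    have := (hη_diff t ht).hasDerivAt.sqrt hE.ne'
    rw [← hSdef] at this
    exact this
  have hF : HasDerivAt (fun x : ℝ => Φ x * Real.sqrt (η x))
      (deriv Φ t * S + Φ t * (deriv η t / (2 * S))) t := by
    have := (hΦ_diff t ht).hasDerivAt.mul hsqη
    rw [← hSdef] at this
    exact this
  have hG : HasDerivAt (fun x : ℝ => -(x * Real.sqrt (x ^ 2 - 4 * a)) / 4)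
      (-(1 * s + t * (t / s)) / 4) t := by
    have := (((hasDerivAt_id t).mul hσ).neg).div_const 4
    rw [← hsdef] at this
    simpa using this
  have hEq2 : (fun x : ℝ => Φ x * Real.sqrt (η x)) =ᶠ[nhds t]
      (fun x : ℝ => -(x * Real.sqrt (x ^ 2 - 4 * a)) / 4) := by
    filter_upwards [hUnhds] with x hx
    have hEx : 0 < Real.sqrt (η x) := Real.sqrt_pos.mpr (hη_pos x hx)
    rw [hΦ_def x hx]
    field_simp
  have key3 : deriv Φ t * S + Φ t * (deriv η t / (2 * S))
      = -(1 * s + t * (t / s)) / 4 := by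
    have := hEq2.deriv_eq
    rw [hF.deriv, hG.deriv] at this
    exact this
  -- key4 : (2/3) η S = t L - s
  have key4 : (2 / 3) * (η t * S) = t * L - s := by
    have h5 := hη_def t ht
    rw [← hsdef, ← hLdef] at h5
    have hrw : η t ^ ((3 : ℝ) / 2) = η t * S := by
      rw [show (3 : ℝ) / 2 = 1 + 1 / 2 by norm_num, Real.rpow_add hE,
        Real.rpow_one, hSdef, Real.sqrt_eq_rpow]
    rw [hrw] at h5
    exact h5
  -- final algebra
  rw [← hSsq]
  field_simp at key3 ⊢
  linear_combination ((3:ℝ)/4) * key3 + 3 * s * t * S * key1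
    - 3 * s * S * key4 - 2 * s * S ^ 2 * hSsq + ((3:ℝ)/2) * S * hssq
end

section
/- Fix a > 0 and r > 0. Suppose x = ny with complex y satisfying dist(y,[0,1]) > r, and suppose the sequence (w_k)_{k=1}^n satisfies w_1 = x - a and w_k = x - (k-1+a) - a(k-1)/w_{k-1}. Write w_k = (x-k)(1 + \delta_k) with \delta_k = \frac{1-a}{x-k} - \frac{ak}{(x-k)^2} + \varepsilon_k. Then there exist constants M_0, M_1, N > 0, depending only on a and r, such that |\delta_k| \le M_0/n and |\varepsilon_k| \le M_1/n^2 for all 1 \le k \le n and all n > N. In particular one may take M_0 = |1-a|/r + 3a/r^2 + a/r^3, M_1 = a(1+r+2rM_0)/r^3, and N = 2M_0. -/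
open Complex

private lemma cabs_sub_le' (X Y : ℂ) :
    ‖X - Y‖ ≤ ‖X‖ + ‖Y‖ := by
  simpa [sub_eq_add_neg] using norm_add_le X (-Y)

private lemma cabs_tri3 (A B C : ℂ) :
    ‖A - B + C‖ ≤ ‖A‖ + ‖B‖ + ‖C‖ := by
  calc ‖A - B + C‖ ≤ ‖A - B‖ + ‖C‖ :=
        norm_add_le _ _
  _ ≤ ‖A‖ + ‖B‖ + ‖C‖ := by
        linarith [cabs_sub_le' A B]

set_option maxHeartbeats 1000000 in
/-- Error bounds for the continued-fraction factors `w_k` of the Charlier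
polynomials: with `x = ny`, `dist(y,[0,1]) > r`, `w₁ = x - a`,
`w_k = x - (k-1+a) - a(k-1)/w_{k-1}`, writing
`w_k = (x-k)(1 + δ_k)` and `δ_k = (1-a)/(x-k) - ak/(x-k)² + ε_k`, there are
constants `M₀, M₁, N > 0` depending only on `a` and `r` — explicitly
`M₀ = |1-a|/r + 3a/r² + a/r³`, `M₁ = a(1+r+2rM₀)/r³`, `N = 2M₀` — with
`|δ_k| ≤ M₀/n` and `|ε_k| ≤ M₁/n²` for `1 ≤ k ≤ n`, `n > N`. -/
theorem wk_error_bounds (a r : ℝ) (ha : 0 < a) (hr : 0 < r) :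
    ∃ M₀ M₁ N : ℝ, 0 < M₀ ∧ 0 < M₁ ∧ 0 < N ∧
      M₀ = |1 - a| / r + 3 * a / r ^ 2 + a / r ^ 3 ∧
      M₁ = a * (1 + r + 2 * r * M₀) / r ^ 3 ∧
      N = 2 * M₀ ∧
      ∀ n : ℕ, N < (n : ℝ) →
      ∀ y : ℂ, r < Metric.infDist y ((fun t : ℝ => (t : ℂ)) '' Set.Icc (0 : ℝ) 1) →
      ∀ w : ℕ → ℂ,
        w 1 = (n : ℂ) * y - a →
        (∀ k : ℕ, 2 ≤ k →
          w k = (n : ℂ) * y - ((k : ℂ) - 1 + a) - a * ((k : ℂ) - 1) / w (k - 1)) →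
        ∀ k : ℕ, 1 ≤ k → k ≤ n →
          ‖w k / ((n : ℂ) * y - k) - 1‖ ≤ M₀ / n ∧
          ‖w k / ((n : ℂ) * y - k) - 1
              - (1 - (a : ℂ)) / ((n : ℂ) * y - k)
              + (a : ℂ) * k / ((n : ℂ) * y - k) ^ 2‖ ≤ M₁ / (n : ℝ) ^ 2 := by
  have habs : (0:ℝ) ≤ |1 - a| := abs_nonneg _
  refine ⟨|1 - a| / r + 3 * a / r ^ 2 + a / r ^ 3,
    a * (1 + r + 2 * r * (|1 - a| / r + 3 * a / r ^ 2 + a / r ^ 3)) / r ^ 3,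
    2 * (|1 - a| / r + 3 * a / r ^ 2 + a / r ^ 3),
    by positivity, by positivity, by positivity, rfl, rfl, rfl, ?_⟩
  set M₀ : ℝ := |1 - a| / r + 3 * a / r ^ 2 + a / r ^ 3 with hM₀def
  have hM₀lb : |1 - a| / r + a / r ^ 2 + (2 * a / r ^ 2 + a / r ^ 3) = M₀ := by
    rw [hM₀def]; ring
  have hM₀pos : 0 < M₀ := by rw [hM₀def]; positivity
  set M₁ : ℝ := a * (1 + r + 2 * r * M₀) / r ^ 3 with hM₁def
  have hM₁pos : 0 < M₁ := by rw [hM₁def]; positivity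
  clear_value M₀ M₁
  intro n hn y hy w hw1 hrec
  have hnR : (0:ℝ) < n := lt_trans (by positivity) hn
  have hn1 : 1 ≤ n := by
    rcases Nat.eq_zero_or_pos n with h | h
    · rw [h] at hnR; norm_num at hnR
    · exact h
  have hn1R : (1:ℝ) ≤ n := by exact_mod_cast hn1
  have hnM : 2 * M₀ < (n:ℝ) := hn
  have hM0half : M₀ / n < 1/2 := by rw [div_lt_iff₀ hnR]; linarith
  have hrn : (0:ℝ) < r * n := by positivity
  -- the key real inequality M₁ ≤ n * (2a/r² + a/r³)
  have hS1 : M₁ ≤ (n:ℝ) * (2 * a / r ^ 2 + a / r ^ 3) := by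
    rw [hM₁def, div_le_iff₀ (by positivity : (0:ℝ) < r ^ 3)]
    have he : (n:ℝ) * (2 * a / r ^ 2 + a / r ^ 3) * r ^ 3 = (n:ℝ) * (2 * a * r + a) := by
      field_simp
    rw [he]
    nlinarith [mul_nonneg ha.le (sub_nonneg.2 hn1R),
      mul_nonneg (mul_nonneg ha.le hr.le) (sub_nonneg.2 hn1R),
      mul_nonneg (mul_nonneg ha.le hr.le) (by linarith : (0:ℝ) ≤ (n:ℝ) - 2 * M₀)]
  -- distance estimate
  have hdist : ∀ j : ℕ, j ≤ n → r * n < ‖(n:ℂ) * y - j‖ := by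
    intro j hj
    have hmemI : (j:ℝ)/(n:ℝ) ∈ Set.Icc (0:ℝ) 1 := by
      constructor
      · positivity
      · rw [div_le_one hnR]; exact_mod_cast hj
    have hmem : ((((j:ℝ)/(n:ℝ)) : ℝ) : ℂ) ∈ (fun t:ℝ => (t:ℂ)) '' Set.Icc (0:ℝ) 1 :=
      Set.mem_image_of_mem _ hmemI
    have h1 : Metric.infDist y ((fun t:ℝ => (t:ℂ)) '' Set.Icc (0:ℝ) 1)
        ≤ dist y ((((j:ℝ)/(n:ℝ)) : ℝ) : ℂ) := Metric.infDist_le_dist_of_mem hmem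
    have h2 : r < dist y ((((j:ℝ)/(n:ℝ)) : ℝ) : ℂ) := lt_of_lt_of_le hy h1
    rw [Complex.dist_eq] at h2
    have hnc : (n:ℂ) ≠ 0 := Nat.cast_ne_zero.2 (by omega)
    have h3 : (n:ℂ)*y - j = (n:ℂ) * (y - ((((j:ℝ)/(n:ℝ)) : ℝ) : ℂ)) := by
      push_cast
      field_simp
    rw [h3, norm_mul, Complex.norm_natCast]
    calc r * n = n * r := mul_comm _ _
    _ < n * ‖y - ((((j:ℝ)/(n:ℝ)) : ℝ) : ℂ)‖ := by
        exact mul_lt_mul_of_pos_left h2 hnR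
  intro k hk1
  induction k, hk1 using Nat.le_induction with
  | base =>
    intro _
    have hx1 : r * n < ‖(n:ℂ)*y - 1‖ := by
      have := hdist 1 hn1; simpa using this
    have hne : (n:ℂ)*y - 1 ≠ 0 := by
      intro h; rw [h] at hx1; simp at hx1; linarith
    constructor
    · have hid : w 1 / ((n:ℂ)*y - 1) - 1 = ((1 - a : ℝ) : ℂ) / ((n:ℂ)*y - 1) := by
        rw [hw1]; push_cast; field_simp; ring
      rw [show ((1:ℕ):ℂ) = 1 by norm_num, hid, norm_div, Complex.norm_real, Real.norm_eq_abs]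
      calc |1 - a| / ‖(n:ℂ)*y - 1‖ ≤ |1 - a| / (r * n) := by
            gcongr
      _ = (|1 - a| / r) / n := by ring
      _ ≤ M₀ / n := by
            gcongr
            have h2 : (0:ℝ) < 3 * a / r ^ 2 + a / r ^ 3 := by positivity
            rw [hM₀def]; linarith
    · have hid : w 1 / ((n:ℂ)*y - 1) - 1 - (1 - (a:ℂ))/((n:ℂ)*y - 1)
          + (a:ℂ) * 1 / ((n:ℂ)*y - 1)^2 = ((a:ℝ):ℂ) / ((n:ℂ)*y - 1)^2 := by
        rw [hw1]; field_simp [hne]; ring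
      rw [show ((1:ℕ):ℂ) = 1 by norm_num, hid, norm_div, Complex.norm_real, Real.norm_eq_abs, norm_pow,
        abs_of_pos ha]
      calc a / ‖(n:ℂ)*y - 1‖ ^ 2 ≤ a / (r*n)^2 := by gcongr
      _ = (a / r^2) / n^2 := by ring
      _ ≤ M₁ / n^2 := by
            gcongr
            rw [hM₁def, div_le_div_iff₀ (by positivity) (by positivity)]
            nlinarith [mul_pos ha (pow_pos hr 2),
              mul_nonneg (mul_nonneg ha.le (pow_pos hr 3).le) hM₀pos.le]
  | succ k hk ih =>
    intro hk1n
    have hkn : k ≤ n := Nat.le_of_succ_le hk1n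
    obtain ⟨hδ, -⟩ := ih hkn
    have hv : r * n < ‖(n:ℂ)*y - k‖ := hdist k hkn
    have hu : r * n < ‖(n:ℂ)*y - (k+1:ℕ)‖ := hdist (k+1) hk1n
    set x : ℂ := (n:ℂ)*y with hxdef
    set v : ℂ := x - k with hvdef
    set u : ℂ := x - ((k:ℂ)+1) with hudef
    have hu' : r * n < ‖u‖ := by
      rw [hudef]; push_cast at hu ⊢; exact hu
    have hUpos : (0:ℝ) < ‖u‖ := lt_trans hrn hu'
    have hVpos : (0:ℝ) < ‖v‖ := lt_trans hrn hv
    have hv0 : v ≠ 0 := by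
      intro h; rw [h] at hVpos; simp at hVpos
    have hu0 : u ≠ 0 := by
      intro h; rw [h] at hUpos; simp at hUpos
    set δ : ℂ := w k / v - 1 with hδdef
    have h1δ : (1:ℝ)/2 ≤ ‖1 + δ‖ := by
      have h := norm_add_le (1 + δ) (-δ)
      rw [show (1 + δ) + (-δ) = 1 by ring, norm_one, norm_neg] at h
      linarith [hδ, hM0half]
    have h1δ0 : (1:ℂ) + δ ≠ 0 := by
      intro h; rw [h] at h1δ; simp at h1δ; linarith
    have hwk : w k = v * (1 + δ) := by
      rw [hδdef]; field_simp; ring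
    have hrec' : w (k+1) = x - ((k:ℂ) + a) - a * k / w k := by
      have h := hrec (k+1) (by omega)
      push_cast at h
      simpa [hxdef] using h
    clear_value x v u δ
    have hu0' : x - ((k:ℂ)+1) ≠ 0 := by rw [← hudef]; exact hu0
    have hv0' : x - (k:ℂ) ≠ 0 := by
      have : ((k:ℂ)) = ((k:ℕ):ℂ) := by push_cast; ring
      rw [this, ← hvdef]; exact hv0
    -- key identity
    have hwk0 : w k ≠ 0 := by rw [hwk]; exact mul_ne_zero hv0 h1δ0
    have hxk : x - ((k:ℂ) + a) = u + (1 - (a:ℂ)) := by rw [hudef]; ring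
    have hstep1 : w (k+1) / u - 1 - (1 - (a:ℂ))/u + (a:ℂ)*((k:ℂ)+1)/u^2
        = (a:ℂ)*((k:ℂ)+1)/u^2 - (a:ℂ)*(k:ℂ)/(u * w k) := by
      rw [hrec', hxk]
      field_simp [hu0, hwk0]
      ring
    have hstep2 : (a:ℂ)*((k:ℂ)+1)/u^2 - (a:ℂ)*(k:ℂ)/(u * w k)
        = (a:ℂ) * x / (u^2 * v) + (a:ℂ) * (k:ℂ) * δ / (u * v * (1+δ)) := by
      rw [hwk, hudef, hvdef]
      field_simp [hu0', hv0', h1δ0]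
      ring
    have hkey : w (k+1) / u - 1 - (1 - (a:ℂ))/u + (a:ℂ)*((k:ℂ)+1)/u^2
        = (a:ℂ) * x / (u^2 * v) + (a:ℂ) * (k:ℂ) * δ / (u * v * (1+δ)) :=
      hstep1.trans hstep2
    have habsx : ‖x‖ ≤ ‖u‖ + (n:ℝ) := by
      have hxe : x = u + ((k:ℂ)+1) := by rw [hudef]; ring
      rw [hxe]
      calc ‖u + ((k:ℂ)+1)‖ ≤ ‖u‖ + ‖(k:ℂ)+1‖ :=
            norm_add_le _ _
      _ ≤ ‖u‖ + (n:ℝ) := by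
            have h1 : ((k:ℂ)+1) = ((k+1:ℕ):ℂ) := by push_cast; ring
            rw [h1, Complex.norm_natCast]
            have h2 : ((k+1:ℕ):ℝ) ≤ (n:ℝ) := by exact_mod_cast hk1n
            linarith
    -- epsilon bound
    have hεb : ‖w (k+1) / u - 1 - (1 - (a:ℂ))/u + (a:ℂ)*((k:ℂ)+1)/u^2‖
        ≤ M₁ / (n:ℝ)^2 := by
      rw [hkey]
      have t1 : ‖(a:ℂ) * x / (u^2 * v)‖
          ≤ a / ((r*n) * (r*n)) + a * n / ((r*n)^2 * (r*n)) := by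
        rw [norm_div, norm_mul, norm_mul, norm_pow, Complex.norm_real, Real.norm_eq_abs, abs_of_pos ha]
        calc a * ‖x‖ / (‖u‖ ^ 2 * ‖v‖)
            ≤ a * (‖u‖ + n) / (‖u‖ ^ 2 * ‖v‖) := by
              gcongr
        _ = a / (‖u‖ * ‖v‖)
              + a * n / (‖u‖ ^ 2 * ‖v‖) := by
              field_simp
        _ ≤ a / ((r*n) * (r*n)) + a * n / ((r*n)^2 * (r*n)) := by
              gcongr <;> first | exact hu'.le | exact hv.le | positivity
      have t2 : ‖(a:ℂ) * (k:ℂ) * δ / (u * v * (1+δ))‖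
          ≤ a * M₀ / ((r*n) * (r*n) * (1/2)) := by
        rw [norm_div, norm_mul, norm_mul, norm_mul, norm_mul, Complex.norm_real, Real.norm_eq_abs,
          abs_of_pos ha, Complex.norm_natCast]
        have hnum : a * (k:ℝ) * ‖δ‖ ≤ a * M₀ := by
          calc a * (k:ℝ) * ‖δ‖ ≤ a * (n:ℝ) * (M₀/n) := by
                gcongr <;> first | exact_mod_cast hkn | exact hδ | positivity
          _ = a * M₀ := by field_simp
        have hden : (r*(n:ℝ)) * (r*(n:ℝ)) * (1/2)
            ≤ ‖u‖ * ‖v‖ * ‖1+δ‖ := by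
          have h1 : (r*(n:ℝ)) * (r*(n:ℝ)) ≤ ‖u‖ * ‖v‖ :=
            mul_le_mul hu'.le hv.le hrn.le hUpos.le
          exact mul_le_mul h1 h1δ (by norm_num) (by positivity)
        exact div_le_div₀ (by positivity) hnum (by positivity) hden
      calc ‖(a:ℂ) * x / (u^2 * v) + (a:ℂ) * (k:ℂ) * δ / (u * v * (1+δ))‖
          ≤ ‖(a:ℂ) * x / (u^2 * v)‖
            + ‖(a:ℂ) * (k:ℂ) * δ / (u * v * (1+δ))‖ := norm_add_le _ _
      _ ≤ (a / ((r*n) * (r*n)) + a * n / ((r*n)^2 * (r*n)))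
            + a * M₀ / ((r*n) * (r*n) * (1/2)) := by linarith
      _ = M₁ / (n:ℝ)^2 := by
            rw [hM₁def]
            field_simp
            ring
    have hcast1 : ((k+1:ℕ):ℂ) = (k:ℂ) + 1 := by push_cast; ring
    constructor
    · -- delta bound for k+1
      rw [hcast1, ← hudef]
      have hid2 : w (k+1) / u - 1 = ((1:ℂ) - a)/u - (a:ℂ)*((k:ℂ)+1)/u^2
          + (w (k+1) / u - 1 - (1 - (a:ℂ))/u + (a:ℂ)*((k:ℂ)+1)/u^2) := by ring
      rw [hid2]
      have t3 : ‖((1:ℂ) - a)/u‖ ≤ |1 - a| / (r*n) := by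
        rw [show ((1:ℂ) - a) = ((1 - a : ℝ):ℂ) by push_cast; ring, norm_div,
          Complex.norm_real, Real.norm_eq_abs]
        gcongr
      have t4 : ‖(a:ℂ)*((k:ℂ)+1)/u^2‖ ≤ a * n / (r*n)^2 := by
        rw [norm_div, norm_mul, norm_pow, Complex.norm_real, Real.norm_eq_abs, abs_of_pos ha,
          show ((k:ℂ)+1) = ((k+1:ℕ):ℂ) by push_cast; ring, Complex.norm_natCast]
        gcongr <;> first | exact_mod_cast hk1n | exact hu'.le | positivity
      calc ‖_‖
          ≤ ‖((1:ℂ) - a)/u‖ + ‖(a:ℂ)*((k:ℂ)+1)/u^2‖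
            + ‖w (k+1) / u - 1 - (1 - (a:ℂ))/u + (a:ℂ)*((k:ℂ)+1)/u^2‖ :=
            cabs_tri3 _ _ _
      _ ≤ |1 - a| / (r*n) + a * n / (r*n)^2 + M₁ / (n:ℝ)^2 := by
            linarith
      _ = (|1 - a| / r + a / r^2 + M₁ / n) / n := by
            field_simp
      _ ≤ M₀ / n := by
            gcongr
            have h5 : M₁ / n ≤ 2 * a / r ^ 2 + a / r ^ 3 := by
              rw [div_le_iff₀ hnR]; linarith [hS1]
            linarith [hM₀lb]
    · rw [hcast1, ← hudef]
      exact hεb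
end
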